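/- Let G be a group with a normal subgroup N isomorphic to the cyclic group ℤ/10 such that the quotient G/N is isomorphic to ℤ/2. Then G is isomorphic to one of: the cyclic group ℤ/20, the direct product ℤ/10 × ℤ/2, the dihedral group of order 20, or the dicyclic group of order 20 (the semidirect product ℤ/5 ⋊ ℤ/4). -/

import Mathlib

section StmtFiveHelpers

variable {G : Type*} [Group G]

private lemma stmt5.zmodPowAdd {x : G} {n : ℕ} [NeZero n] (hx : orderOf x = n) (a b : ZMod n) :
    x ^ (a + b).val = x ^ a.val * x ^ b.val := by
  subst hx
  rw [← pow_add, ZMod.val_add, pow_mod_orderOf]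

private lemma stmt5.zmodPowSub {x : G} {n : ℕ} [NeZero n] (hx : orderOf x = n) (a b : ZMod n) :
    x ^ (a - b).val = x ^ a.val * (x ^ b.val)⁻¹ := by
  have := stmt5.zmodPowAdd hx (a - b) b
  rw [sub_add_cancel] at this
  rw [eq_mul_inv_iff_mul_eq, ← this]

private def stmt5.zmodHom (u : G) (n : ℕ) [NeZero n] (hu : orderOf u = n) :
    Multiplicative (ZMod n) →* G where
  toFun := fun i => u ^ (Multiplicative.toAdd i).val
  map_one' := by simp [ZMod.val_zero]
  map_mul' := fun a b => stmt5.zmodPowAdd hu (Multiplicative.toAdd a) (Multiplicative.toAdd b)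

private lemma stmt5.cyclicEquiv (u : G) (n : ℕ) [NeZero n] (hu : orderOf u = n)
    (hsurj : ∀ g : G, ∃ k : ℕ, u ^ k = g) :
    Nonempty (G ≃* Multiplicative (ZMod n)) := by
  refine ⟨(MulEquiv.ofBijective (stmt5.zmodHom u n hu) ⟨?_, ?_⟩).symm⟩
  · intro a b hab
    simp only [stmt5.zmodHom, MonoidHom.coe_mk, OneHom.coe_mk] at hab
    rw [pow_eq_pow_iff_modEq, hu, Nat.ModEq,
      Nat.mod_eq_of_lt (ZMod.val_lt _), Nat.mod_eq_of_lt (ZMod.val_lt _)] at hab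
    exact Multiplicative.toAdd.injective (ZMod.val_injective _ hab)
  · intro g
    obtain ⟨k, hk⟩ := hsurj g
    refine ⟨Multiplicative.ofAdd (k : ZMod n), ?_⟩
    simp only [stmt5.zmodHom, MonoidHom.coe_mk, OneHom.coe_mk, toAdd_ofAdd]
    rw [ZMod.val_natCast, ← hu, pow_mod_orderOf, hk]

end StmtFiveHelpers

/-- Any extension of `ℤ/10` by `ℤ/2` is isomorphic to `ℤ/20`, `ℤ/10 × ℤ/2`,
the dihedral group of order 20, or the dicyclic group of order 20. -/
theorem stmt5 {G : Type*} [Group G]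
    (N : Subgroup G) [N.Normal]
    (hN : Nonempty (N ≃* Multiplicative (ZMod 10)))
    (hQ : Nonempty ((G ⧸ N) ≃* Multiplicative (ZMod 2))) :
    Nonempty (G ≃* Multiplicative (ZMod 20)) ∨
    Nonempty (G ≃* Multiplicative (ZMod 10 × ZMod 2)) ∨
    Nonempty (G ≃* DihedralGroup 10) ∨
    Nonempty (G ≃* QuaternionGroup 5) := by
  have hnorm : N.Normal := inferInstance
  obtain ⟨e⟩ := hN
  obtain ⟨q⟩ := hQ
  -- finiteness and cardinalities
  have hNfin : Finite N := Finite.of_equiv _ e.symm.toEquiv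
  have hQfin : Finite (G ⧸ N) := Finite.of_equiv _ q.symm.toEquiv
  have hGfin : Finite G := Finite.of_equiv _ (Subgroup.groupEquivQuotientProdSubgroup (s := N)).symm
  have hcardN : Nat.card N = 10 := by
    rw [Nat.card_congr e.toEquiv]; simp [Nat.card_eq_fintype_card]
  have hcardQ : Nat.card (G ⧸ N) = 2 := by
    rw [Nat.card_congr q.toEquiv]; simp [Nat.card_eq_fintype_card]
  have hcardG : Nat.card G = 20 := by
    rw [Subgroup.card_eq_card_quotient_mul_card_subgroup N, hcardN, hcardQ]
  -- the generator of N
  set x : G := ((e.symm (Multiplicative.ofAdd 1) : N) : G) with hxdef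
  have hx : orderOf x = 10 := by
    rw [Subgroup.orderOf_coe, MulEquiv.orderOf_eq, orderOf_ofAdd_eq_addOrderOf,
      ZMod.addOrderOf_one]
  have hxmem : x ∈ N := SetLike.coe_mem _
  have hNx : N = Subgroup.zpowers x := by
    refine (Subgroup.eq_of_le_of_card_ge (Subgroup.zpowers_le.mpr hxmem) ?_).symm
    rw [hcardN, Nat.card_zpowers, hx]
  have hx10 : x ^ (10 : ℕ) = 1 := by rw [← hx]; exact pow_orderOf_eq_one x
  have hfinx : IsOfFinOrder x := by rw [← orderOf_pos_iff, hx]; norm_num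
  -- an element outside N
  have : Nontrivial (G ⧸ N) := Equiv.nontrivial q.toEquiv
  obtain ⟨c, hcne⟩ := exists_ne (1 : G ⧸ N)
  obtain ⟨t, rfl⟩ := QuotientGroup.mk_surjective c
  rw [ne_eq, QuotientGroup.eq_one_iff] at hcne
  have ht : t ∉ N := hcne
  -- every square is in N
  have hsq : ∀ g : G, g ^ 2 ∈ N := by
    intro g
    rw [← QuotientGroup.eq_one_iff]
    have hmk : ((g ^ 2 : G) : G ⧸ N) = ((g : G ⧸ N)) ^ 2 := rfl
    rw [hmk]
    apply q.injective
    rw [map_pow, map_one]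
    have h2 : ∀ a : Multiplicative (ZMod 2), a ^ 2 = 1 := by decide
    exact h2 _
  -- decomposition of G into two cosets
  have hdecomp : ∀ g : G, g ∈ N ∨ t⁻¹ * g ∈ N := by
    intro g
    by_cases hg : g ∈ N
    · exact Or.inl hg
    · right
      rw [← QuotientGroup.eq_one_iff] at hg ⊢
      have hmk : ((t⁻¹ * g : G) : G ⧸ N) = ((t : G ⧸ N))⁻¹ * g := rfl
      rw [hmk, inv_mul_eq_one]
      apply q.injective
      have h2 : ∀ a b : Multiplicative (ZMod 2), a ≠ 1 → b ≠ 1 → a = b := by decide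
      refine h2 _ _ (fun h => ?_) (fun h => hg ?_)
      · exact ht (QuotientGroup.eq_one_iff t |>.mp (q.injective (by rw [h, map_one])))
      · apply q.injective; rw [h, map_one]
  -- the conjugation action of t on x is trivial or inversion
  have hconjmem : t * x * t⁻¹ ∈ Subgroup.zpowers x := by
    rw [← hNx]; exact hnorm.conj_mem x hxmem t
  obtain ⟨k, hk⟩ := Subgroup.mem_zpowers_iff.mp hconjmem
  have ht2mem : t ^ 2 ∈ Subgroup.zpowers x := hNx ▸ hsq t
  obtain ⟨m, hm⟩ := Subgroup.mem_zpowers_iff.mp ht2mem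
  have hcomm : x ^ m * x = x * x ^ m := ((Commute.zpow_left (Commute.refl x) m).eq)
  have hkk : x ^ (k * k) = x := by
    have h1 : t * (t * x * t⁻¹) * t⁻¹ = x ^ (k * k) := by
      rw [← hk, ← conj_zpow, ← hk, zpow_mul]
    have h2 : t * (t * x * t⁻¹) * t⁻¹ = t ^ 2 * x * (t ^ 2)⁻¹ := by
      rw [pow_two]; group
    rw [h2, ← hm] at h1
    rw [← h1, hcomm]
    group
  have hmod : k * k ≡ 1 [ZMOD (10 : ℕ)] := by
    have := zpow_eq_zpow_iff_modEq.mp (hkk.trans (zpow_one x).symm)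
    rwa [hx] at this
  have hcases : t * x * t⁻¹ = x ∨ t * x * t⁻¹ = x⁻¹ := by
    have hz : (k : ZMod 10) = 1 ∨ (k : ZMod 10) = 9 := by
      have h : ((k * k : ℤ) : ZMod 10) = ((1 : ℤ) : ZMod 10) :=
        (ZMod.intCast_eq_intCast_iff _ _ _).mpr hmod
      push_cast at h
      have hd : ∀ a : ZMod 10, a * a = 1 → a = 1 ∨ a = 9 := by decide
      exact hd _ h
    have key : ∀ j : ℤ, (k : ZMod 10) = (j : ZMod 10) → x ^ k = x ^ j := by
      intro j hj
      rw [zpow_eq_zpow_iff_modEq, hx]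
      exact (ZMod.intCast_eq_intCast_iff _ _ _).mp (by push_cast [hj]; rfl)
    rcases hz with hz | hz
    · left
      rw [← hk]
      simpa using key 1 (by push_cast [hz]; rfl)
    · right
      rw [← hk, key 9 (by push_cast [hz]; rfl)]
      refine eq_inv_of_mul_eq_one_left ?_
      calc x ^ (9 : ℤ) * x = x ^ (9 + 1 : ℤ) := (zpow_add_one x 9).symm
        _ = 1 := by
            norm_num
            exact_mod_cast hx10
  -- t² as a natural power of x
  obtain ⟨kk, hkknat⟩ := hfinx.mem_powers_iff_mem_zpowers.mpr ht2mem
  have ht2 : t ^ 2 = x ^ kk := (show x ^ kk = t ^ 2 from hkknat).symm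
  clear hkknat hkk hmod hk hm hcomm hconjmem ht2mem
  rcases hcases with hc | hc
  · -- commuting case: G is abelian
    have hC : Commute t x := mul_inv_eq_iff_eq_mul.mp hc
    have husq : ∀ j : ℕ, (t * x ^ j) ^ 2 = x ^ (kk + 2 * j) := by
      intro j
      calc (t * x ^ j) ^ 2 = t * (x ^ j * t) * x ^ j := by rw [pow_two]; group
        _ = t * (t * x ^ j) * x ^ j := by rw [← (hC.pow_right j).eq]
        _ = t ^ 2 * (x ^ j * x ^ j) := by rw [pow_two]; group
        _ = x ^ kk * x ^ (2 * j) := by rw [ht2, ← pow_add, two_mul]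
        _ = x ^ (kk + 2 * j) := by rw [← pow_add]
    rcases Nat.even_or_odd kk with ⟨cc, hcc⟩ | ⟨cc, hcc⟩
    · -- even case : G ≅ ZMod 10 × ZMod 2
      right; left
      set j : ℕ := 4 * cc with hj
      set u : G := t * x ^ j with hu
      have hu2 : u ^ 2 = 1 := by
        rw [hu, husq j, hcc, show cc + cc + 2 * (4 * cc) = 10 * cc by ring, pow_mul, hx10,
          one_pow]
      have hune : u ≠ 1 := by
        intro h
        apply ht
        have htinv : t = (x ^ j)⁻¹ := by
          rw [eq_inv_iff_mul_eq_one]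
          exact h
        rw [htinv, hNx]
        exact (Subgroup.zpowers x).inv_mem (Subgroup.pow_mem _ (Subgroup.mem_zpowers x) j)
      have hord : orderOf u = 2 := orderOf_eq_prime hu2 hune
      have hCxu : Commute x u := Commute.mul_right hC.symm ((Commute.refl x).pow_right j)
      have key : ∀ (a1 b1 : ZMod 10) (a2 b2 : ZMod 2),
          x ^ ((a1 + b1).val) * u ^ ((a2 + b2).val) =
            (x ^ a1.val * u ^ a2.val) * (x ^ b1.val * u ^ b2.val) := by
        intro a1 b1 a2 b2
        rw [stmt5.zmodPowAdd hx, stmt5.zmodPowAdd hord]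
        calc x ^ a1.val * x ^ b1.val * (u ^ a2.val * u ^ b2.val)
            = x ^ a1.val * (x ^ b1.val * u ^ a2.val) * u ^ b2.val := by group
          _ = x ^ a1.val * (u ^ a2.val * x ^ b1.val) * u ^ b2.val := by
              rw [(hCxu.pow_pow b1.val a2.val).eq]
          _ = _ := by group
      let ψ : Multiplicative (ZMod 10 × ZMod 2) →* G :=
        { toFun := fun p =>
            x ^ ((Multiplicative.toAdd p).1.val) * u ^ ((Multiplicative.toAdd p).2.val)
          map_one' := by
            show x ^ ((0 : ZMod 10)).val * u ^ ((0 : ZMod 2)).val = 1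
            simp [ZMod.val_zero]
          map_mul' := fun p q =>
            key (Multiplicative.toAdd p).1 (Multiplicative.toAdd q).1
              (Multiplicative.toAdd p).2 (Multiplicative.toAdd q).2 }
      have hsurj : Function.Surjective ψ := by
        intro g
        rcases hdecomp g with hg | hg
        · rw [hNx, ← hfinx.mem_powers_iff_mem_zpowers] at hg
          obtain ⟨n, hn⟩ := hg
          refine ⟨Multiplicative.ofAdd ((n : ZMod 10), 0), ?_⟩
          show x ^ ((n : ZMod 10)).val * u ^ ((0 : ZMod 2)).val = g
          rw [ZMod.val_natCast, ZMod.val_zero, pow_zero, mul_one, ← hx, pow_mod_orderOf]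
          exact hn
        · rw [hNx, ← hfinx.mem_powers_iff_mem_zpowers] at hg
          obtain ⟨n, hn⟩ := hg
          have hg' : g = t * x ^ n := by
            rw [show x ^ n = t⁻¹ * g from hn, mul_inv_cancel_left]
          refine ⟨Multiplicative.ofAdd ((n : ZMod 10) - (j : ZMod 10), 1), ?_⟩
          show x ^ (((n : ZMod 10) - (j : ZMod 10))).val * u ^ ((1 : ZMod 2)).val = g
          rw [show ((1 : ZMod 2)).val = 1 from rfl, pow_one, hg', hu]
          set A : ZMod 10 := (n : ZMod 10) - (j : ZMod 10) with hA
          calc x ^ A.val * (t * x ^ j)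
              = (x ^ A.val * t) * x ^ j := by rw [mul_assoc]
            _ = (t * x ^ A.val) * x ^ j := by rw [(hC.pow_right A.val).eq]
            _ = t * x ^ (A.val + j) := by rw [pow_add]; group
            _ = t * x ^ n := by
                congr 1
                rw [pow_eq_pow_iff_modEq, hx]
                refine (ZMod.natCast_eq_natCast_iff _ _ _).mp ?_
                push_cast
                rw [ZMod.natCast_val, ZMod.cast_id, hA]
                ring
      have : Fintype G := Fintype.ofFinite G
      have hbij : Function.Bijective ψ := by
        rw [Fintype.bijective_iff_surjective_and_card]
        refine ⟨hsurj, ?_⟩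
        rw [← Nat.card_eq_fintype_card, ← Nat.card_eq_fintype_card, hcardG]
        simp [Nat.card_eq_fintype_card]
      exact ⟨(MulEquiv.ofBijective ψ hbij).symm⟩
    · -- odd case : G is cyclic of order 20
      left
      set j : ℕ := 9 * cc + 5 with hj
      set u : G := t * x ^ j with hu
      have hu2 : u ^ 2 = x := by
        rw [hu, husq j, hcc, show 2 * cc + 1 + 2 * (9 * cc + 5) = 10 * (2 * cc + 1) + 1 by ring,
          pow_add, pow_mul, hx10, one_pow, pow_one, one_mul]
      have h20 : u ^ (20 : ℕ) = 1 := by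
        rw [show (20 : ℕ) = 2 * 10 by norm_num, pow_mul, hu2, hx10]
      have hord2 : orderOf u / Nat.gcd (orderOf u) 2 = 10 := by
        rw [← orderOf_pow, hu2, hx]
      have hord : orderOf u = 20 := by
        have hdvd : orderOf u ∣ 20 := orderOf_dvd_of_pow_eq_one h20
        rcases (Nat.dvd_prime Nat.prime_two).mp (Nat.gcd_dvd_right (orderOf u) 2) with hg | hg
        · exfalso
          rw [hg, Nat.div_one] at hord2
          rw [hord2] at hg
          norm_num at hg
        · have h2d : 2 ∣ orderOf u := hg ▸ Nat.gcd_dvd_left (orderOf u) 2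
          rw [hg] at hord2
          omega
      have hfinu : IsOfFinOrder u := by rw [← orderOf_pos_iff, hord]; norm_num
      have htop : Subgroup.zpowers u = ⊤ :=
        Subgroup.eq_top_of_card_eq _ (by rw [Nat.card_zpowers, hord, hcardG])
      have hsurj : ∀ g : G, ∃ kn : ℕ, u ^ kn = g := by
        intro g
        have hg : g ∈ Subgroup.zpowers u := htop ▸ Subgroup.mem_top g
        obtain ⟨kn, hkn⟩ := hfinu.mem_powers_iff_mem_zpowers.mpr hg
        exact ⟨kn, hkn⟩
      exact stmt5.cyclicEquiv u 20 hord hsurj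
  · -- inversion case : dihedral or dicyclic
    have hmaster : ∀ n : ℕ, t * x ^ n * t⁻¹ = (x ^ n)⁻¹ := by
      intro n
      rw [← conj_pow, hc, inv_pow]
    have hmain : ∀ n : ℕ, t * x ^ n = (x ^ n)⁻¹ * t := fun n =>
      mul_inv_eq_iff_eq_mul.mp (hmaster n)
    have hcommxpow : ∀ a b : ℕ, x ^ a * (x ^ b)⁻¹ = (x ^ b)⁻¹ * x ^ a := fun a b =>
      ((Commute.pow_pow (Commute.refl x) a b).inv_right).eq
    -- t² = 1 or t² = x^5
    have h2kk : x ^ (kk + kk) = 1 := by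
      have h1 : t * t ^ 2 * t⁻¹ = t ^ 2 := by group
      rw [ht2, hmaster kk] at h1
      have h3 : (x ^ kk)⁻¹ * x ^ kk = 1 := inv_mul_cancel _
      rw [h1] at h3
      rw [pow_add]
      exact h3
    have hdvd10 : 10 ∣ kk + kk := hx ▸ orderOf_dvd_of_pow_eq_one h2kk
    have hmod10 : kk % 10 = 0 ∨ kk % 10 = 5 := by omega
    have ht2' : t ^ 2 = 1 ∨ t ^ 2 = x ^ (5 : ℕ) := by
      have hred : t ^ 2 = x ^ (kk % 10) := by rw [ht2, ← hx, pow_mod_orderOf]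
      rcases hmod10 with h | h
      · left; rw [hred, h, pow_zero]
      · right; rw [hred, h]
    have : Fintype G := Fintype.ofFinite G
    rcases ht2' with ht2' | ht2'
    · -- dihedral
      right; right; left
      have htt : ∀ n : ℕ, t * (t * x ^ n) = x ^ n := fun n => by
        rw [← mul_assoc, ← pow_two, ht2', one_mul]
      let φ : DihedralGroup 10 →* G :=
        { toFun := fun g => match g with
            | .r i => x ^ i.val
            | .sr i => t * x ^ i.val
          map_one' := by
            show x ^ (0 : ZMod 10).val = 1
            simp [ZMod.val_zero]
          map_mul' := by
            rintro (i | i) (j | j)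
            · show x ^ (i + j).val = x ^ i.val * x ^ j.val
              exact stmt5.zmodPowAdd hx i j
            · show t * x ^ (j - i).val = x ^ i.val * (t * x ^ j.val)
              rw [hmain, hmain, stmt5.zmodPowSub hx j i, mul_inv_rev, inv_inv]
              group
            · show t * x ^ (i + j).val = t * x ^ i.val * x ^ j.val
              rw [stmt5.zmodPowAdd hx i j]; group
            · show x ^ (j - i).val = t * x ^ i.val * (t * x ^ j.val)
              rw [stmt5.zmodPowSub hx j i, hmain, mul_assoc, htt, hcommxpow] }
      have hsurj : Function.Surjective φ := by
        intro g
        rcases hdecomp g with hg | hg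
        · rw [hNx, ← hfinx.mem_powers_iff_mem_zpowers] at hg
          obtain ⟨n, hn⟩ := hg
          refine ⟨.r (n : ZMod 10), ?_⟩
          show x ^ ((n : ZMod 10)).val = g
          rw [ZMod.val_natCast, ← hx, pow_mod_orderOf]
          exact hn
        · rw [hNx, ← hfinx.mem_powers_iff_mem_zpowers] at hg
          obtain ⟨n, hn⟩ := hg
          refine ⟨.sr (n : ZMod 10), ?_⟩
          show t * x ^ ((n : ZMod 10)).val = g
          rw [ZMod.val_natCast, ← hx, pow_mod_orderOf,
            show x ^ n = t⁻¹ * g from hn, mul_inv_cancel_left]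
      have hbij : Function.Bijective φ := by
        rw [Fintype.bijective_iff_surjective_and_card]
        refine ⟨hsurj, ?_⟩
        rw [DihedralGroup.card, ← Nat.card_eq_fintype_card, hcardG]
      exact ⟨(MulEquiv.ofBijective φ hbij).symm⟩
    · -- dicyclic
      right; right; right
      have hx' : orderOf x = 2 * 5 := by rw [hx]
      have htt : ∀ n : ℕ, t * (t * x ^ n) = x ^ 5 * x ^ n := fun n => by
        rw [← mul_assoc, ← pow_two, ht2']
      have hv5 : (((5 : ℕ) : ZMod (2 * 5))).val = 5 := by
        rw [ZMod.val_natCast]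
      let φ : QuaternionGroup 5 →* G :=
        { toFun := fun g => match g with
            | .a i => x ^ i.val
            | .xa i => t * x ^ i.val
          map_one' := by
            show x ^ (0 : ZMod (2 * 5)).val = 1
            simp [ZMod.val_zero]
          map_mul' := by
            rintro (i | i) (j | j)
            · show x ^ (i + j).val = x ^ i.val * x ^ j.val
              exact stmt5.zmodPowAdd hx' i j
            · show t * x ^ (j - i).val = x ^ i.val * (t * x ^ j.val)
              rw [hmain, hmain, stmt5.zmodPowSub hx' j i, mul_inv_rev, inv_inv]
              group
            · show t * x ^ (i + j).val = t * x ^ i.val * x ^ j.val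
              rw [stmt5.zmodPowAdd hx' i j]; group
            · show x ^ (((5 : ℕ) : ZMod (2 * 5)) + j - i).val = t * x ^ i.val * (t * x ^ j.val)
              rw [stmt5.zmodPowSub hx' _ i, stmt5.zmodPowAdd hx' _ j, hv5, hmain,
                mul_assoc ((x ^ i.val)⁻¹) t, htt, ← pow_add, hcommxpow] }
      have hsurj : Function.Surjective φ := by
        intro g
        rcases hdecomp g with hg | hg
        · rw [hNx, ← hfinx.mem_powers_iff_mem_zpowers] at hg
          obtain ⟨n, hn⟩ := hg
          refine ⟨.a (n : ZMod (2 * 5)), ?_⟩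
          show x ^ ((n : ZMod (2 * 5))).val = g
          rw [ZMod.val_natCast, ← hx', pow_mod_orderOf]
          exact hn
        · rw [hNx, ← hfinx.mem_powers_iff_mem_zpowers] at hg
          obtain ⟨n, hn⟩ := hg
          refine ⟨.xa (n : ZMod (2 * 5)), ?_⟩
          show t * x ^ ((n : ZMod (2 * 5))).val = g
          rw [ZMod.val_natCast, ← hx', pow_mod_orderOf,
            show x ^ n = t⁻¹ * g from hn, mul_inv_cancel_left]
      have hbij : Function.Bijective φ := by
        rw [Fintype.bijective_iff_surjective_and_card]
        refine ⟨hsurj, ?_⟩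
        rw [QuaternionGroup.card, ← Nat.card_eq_fintype_card, hcardG]
      exact ⟨(MulEquiv.ofBijective φ hbij).symm⟩
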